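/- Let R be a ring with a group G acting by ring automorphisms, and suppose R is G-prime (the zero ideal is G-prime). If the set of minimal prime ideals of R is finite and nonempty, then G acts transitively on the set of minimal primes of R. Equivalently: the minimal primes of a G-prime ring with finitely many minimal primes form a single G-orbit. -/

import Mathlib

open Pointwise

/-- A two-sided ideal of a (possibly noncommutative) ring, as a subset. -/
structure IsTwoSidedIdealSet (R : Type*) [Ring R] (I : Set R) : Prop where
  zero_mem : (0 : R) ∈ I
  add_mem : ∀ ⦃a b : R⦄, a ∈ I → b ∈ I → a + b ∈ I
  neg_mem : ∀ ⦃a : R⦄, a ∈ I → -a ∈ I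
  mul_mem_left : ∀ (r : R) ⦃a : R⦄, a ∈ I → r * a ∈ I
  mul_mem_right : ∀ (r : R) ⦃a : R⦄, a ∈ I → a * r ∈ I

/-- A prime two-sided ideal: proper, and `A*B ⊆ P` for two-sided ideals `A, B`
implies `A ⊆ P` or `B ⊆ P`.  (Note `A*B ⊆ P` is equivalent to
`∀ a ∈ A, ∀ b ∈ B, a*b ∈ P` since `P` is closed under addition.) -/
def IsPrimeTI (R : Type*) [Ring R] (P : Set R) : Prop :=
  IsTwoSidedIdealSet R P ∧ P ≠ Set.univ ∧
    ∀ A B : Set R, IsTwoSidedIdealSet R A → IsTwoSidedIdealSet R B →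
      (∀ a ∈ A, ∀ b ∈ B, a * b ∈ P) → A ⊆ P ∨ B ⊆ P

/-- A `G`-prime ideal: a proper `G`-stable two-sided ideal `I` such that
`A*B ⊆ I` for `G`-stable two-sided ideals `A, B` implies `A ⊆ I` or `B ⊆ I`. -/
def IsGPrime (G R : Type*) [Group G] [Ring R] [MulSemiringAction G R] (I : Set R) : Prop :=
  IsTwoSidedIdealSet R I ∧ I ≠ Set.univ ∧ (∀ g : G, g • I = I) ∧
    ∀ A B : Set R, IsTwoSidedIdealSet R A → IsTwoSidedIdealSet R B →
      (∀ g : G, g • A = A) → (∀ g : G, g • B = B) →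
      (∀ a ∈ A, ∀ b ∈ B, a * b ∈ I) → A ⊆ I ∨ B ⊆ I


/-- The set of minimal prime two-sided ideals of `R`. -/
def MinPrimesTI (R : Type*) [Ring R] : Set (Set R) :=
  {P | IsPrimeTI R P ∧ ∀ P' : Set R, IsPrimeTI R P' → P' ⊆ P → P' = P}


section Aux

variable {G R : Type*} [Group G] [Ring R] [MulSemiringAction G R]

lemma tsi_smul {I : Set R} (h : IsTwoSidedIdealSet R I) (g : G) :
    IsTwoSidedIdealSet R (g • I) := by
  constructor
  · exact ⟨0, h.zero_mem, smul_zero g⟩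
  · rintro _ _ ⟨a, ha, rfl⟩ ⟨b, hb, rfl⟩
    exact ⟨a + b, h.add_mem ha hb, smul_add g a b⟩
  · rintro _ ⟨a, ha, rfl⟩
    exact ⟨-a, h.neg_mem ha, smul_neg g a⟩
  · rintro r _ ⟨a, ha, rfl⟩
    refine ⟨g⁻¹ • r * a, h.mul_mem_left _ ha, ?_⟩
    show g • (g⁻¹ • r * a) = r * g • a
    rw [smul_mul', smul_inv_smul]
  · rintro r _ ⟨a, ha, rfl⟩
    refine ⟨a * g⁻¹ • r, h.mul_mem_right _ ha, ?_⟩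
    show g • (a * g⁻¹ • r) = g • a * r
    rw [smul_mul', smul_inv_smul]

lemma subset_smul_iff {A P : Set R} (g : G) : A ⊆ g • P ↔ g⁻¹ • A ⊆ P := by
  constructor
  · intro h
    have h2 := Set.smul_set_mono (a := g⁻¹) h
    rwa [inv_smul_smul] at h2
  · intro h
    have h2 := Set.smul_set_mono (a := g) h
    rwa [smul_inv_smul] at h2

lemma prime_smul {P : Set R} (h : IsPrimeTI R P) (g : G) : IsPrimeTI R (g • P) := by
  obtain ⟨hI, hne, hpr⟩ := h
  refine ⟨tsi_smul hI g, ?_, ?_⟩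
  · intro hu
    apply hne
    have h2 : g⁻¹ • (g • P) = g⁻¹ • (Set.univ : Set R) := by rw [hu]
    rwa [inv_smul_smul, Set.smul_set_univ] at h2
  · intro A B hA hB hab
    have key : ∀ a ∈ g⁻¹ • A, ∀ b ∈ g⁻¹ • B, a * b ∈ P := by
      rintro _ ⟨a, ha, rfl⟩ _ ⟨b, hb, rfl⟩
      obtain ⟨p, hp, hpe⟩ := hab a ha b hb
      rw [← smul_mul', ← hpe, inv_smul_smul]
      exact hp
    rcases hpr _ _ (tsi_smul hA g⁻¹) (tsi_smul hB g⁻¹) key with h' | h'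
    · exact Or.inl ((subset_smul_iff g).mpr h')
    · exact Or.inr ((subset_smul_iff g).mpr h')

lemma minprime_smul {P : Set R} (h : P ∈ MinPrimesTI R) (g : G) :
    g • P ∈ MinPrimesTI R := by
  obtain ⟨hp, hmin⟩ := h
  refine ⟨prime_smul hp g, ?_⟩
  intro P' hP' hsub
  have h1 : g⁻¹ • P' ⊆ P := (subset_smul_iff g).mp hsub
  have h2 := hmin _ (prime_smul hP' g⁻¹) h1
  calc P' = g • (g⁻¹ • P') := (smul_inv_smul g P').symm
    _ = g • P := by rw [h2]

lemma tsi_sInter {S : Set (Set R)} (h : ∀ Q ∈ S, IsTwoSidedIdealSet R Q) :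
    IsTwoSidedIdealSet R (⋂₀ S) := by
  constructor
  · exact Set.mem_sInter.mpr fun Q hQ => (h Q hQ).zero_mem
  · intro a b ha hb
    exact Set.mem_sInter.mpr fun Q hQ =>
      (h Q hQ).add_mem (Set.mem_sInter.mp ha Q hQ) (Set.mem_sInter.mp hb Q hQ)
  · intro a ha
    exact Set.mem_sInter.mpr fun Q hQ => (h Q hQ).neg_mem (Set.mem_sInter.mp ha Q hQ)
  · intro r a ha
    exact Set.mem_sInter.mpr fun Q hQ => (h Q hQ).mul_mem_left r (Set.mem_sInter.mp ha Q hQ)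
  · intro r a ha
    exact Set.mem_sInter.mpr fun Q hQ => (h Q hQ).mul_mem_right r (Set.mem_sInter.mp ha Q hQ)

lemma exists_subset_of_sInter_subset {P : Set R} (hP : IsPrimeTI R P)
    {S : Set (Set R)} (hfin : S.Finite) :
    (∀ Q ∈ S, IsTwoSidedIdealSet R Q) → ⋂₀ S ⊆ P → ∃ Q ∈ S, Q ⊆ P := by
  refine Set.Finite.induction_on (motive := fun S _ =>
    (∀ Q ∈ S, IsTwoSidedIdealSet R Q) → ⋂₀ S ⊆ P → ∃ Q ∈ S, Q ⊆ P) S hfin ?_ ?_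
  · intro _ hsub
    exfalso
    apply hP.2.1
    apply Set.eq_univ_of_univ_subset
    simpa using hsub
  · intro Q S hQS hSfin ih hS hsub
    have hQ := hS Q (Set.mem_insert _ _)
    have hS' : ∀ Q' ∈ S, IsTwoSidedIdealSet R Q' :=
      fun Q' h' => hS Q' (Set.mem_insert_of_mem _ h')
    have hmul : ∀ a ∈ Q, ∀ b ∈ ⋂₀ S, a * b ∈ P := by
      intro a ha b hb
      apply hsub
      rw [Set.sInter_insert]
      exact ⟨hQ.mul_mem_right b ha,
        Set.mem_sInter.mpr fun T hT => (hS' T hT).mul_mem_left a (Set.mem_sInter.mp hb T hT)⟩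
    rcases hP.2.2 Q (⋂₀ S) hQ (tsi_sInter hS') hmul with h | h
    · exact ⟨Q, Set.mem_insert _ _, h⟩
    · obtain ⟨Q', hQ', hsub'⟩ := ih hS' h
      exact ⟨Q', Set.mem_insert_of_mem _ hQ', hsub'⟩

lemma smul_sInter_eq {S : Set (Set R)} (g : G)
    (hstab : ∀ h : G, ∀ Q, Q ∈ S → h • Q ∈ S) :
    g • ⋂₀ S = ⋂₀ S := by
  ext x
  rw [Set.mem_smul_set_iff_inv_smul_mem]
  simp only [Set.mem_sInter]
  constructor
  · intro hx Q hQ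
    have h1 := hx (g⁻¹ • Q) (hstab g⁻¹ Q hQ)
    rwa [Set.smul_mem_smul_set_iff] at h1
  · intro hx Q hQ
    have h1 := hx (g • Q) (hstab g Q hQ)
    rwa [Set.mem_smul_set_iff_inv_smul_mem] at h1

end Aux

/-- let `R` be a `G`-prime ring (the zero ideal is `G`-prime)
which is semiprime with finitely many (and at least one) minimal primes, so
that the intersection of the minimal primes is zero.  Then `G` permutes the
minimal primes of `R` transitively: they form a single `G`-orbit. -/
theorem minPrimes_single_orbit {G R : Type*} [Group G] [Ring R] [MulSemiringAction G R]
    (hGprime : IsGPrime G R ({0} : Set R))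
    (hfin : (MinPrimesTI R).Finite) (hne : (MinPrimesTI R).Nonempty)
    (hsemi : ⋂₀ MinPrimesTI R = ({0} : Set R)) :
    ∀ P ∈ MinPrimesTI R, ∀ P' ∈ MinPrimesTI R, ∃ g : G, g • P = P' := by
  intro P hP P' hP'
  set O : Set (Set R) := {Q | ∃ g : G, g • P = Q} with hOdef
  have hOsub : O ⊆ MinPrimesTI R := by rintro Q ⟨g, rfl⟩; exact minprime_smul hP g
  have hPO : P ∈ O := ⟨1, one_smul G P⟩
  have hOstab : ∀ h : G, ∀ Q, Q ∈ O → h • Q ∈ O := by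
    rintro h Q ⟨k, rfl⟩
    exact ⟨h * k, mul_smul h k P⟩
  have hCstab : ∀ h : G, ∀ Q, Q ∈ MinPrimesTI R \ O → h • Q ∈ MinPrimesTI R \ O := by
    rintro h Q ⟨hQmin, hQO⟩
    refine ⟨minprime_smul hQmin h, fun hin => hQO ?_⟩
    have := hOstab h⁻¹ _ hin
    rwa [inv_smul_smul] at this
  have hAideal : IsTwoSidedIdealSet R (⋂₀ O) :=
    tsi_sInter fun Q hQ => (hOsub hQ).1.1
  have hBideal : IsTwoSidedIdealSet R (⋂₀ (MinPrimesTI R \ O)) :=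
    tsi_sInter fun Q hQ => hQ.1.1.1
  have hab : ∀ a ∈ ⋂₀ O, ∀ b ∈ ⋂₀ (MinPrimesTI R \ O), a * b ∈ ({0} : Set R) := by
    intro a ha b hb
    rw [← hsemi]
    refine Set.mem_sInter.mpr fun Q hQ => ?_
    by_cases hQO : Q ∈ O
    · exact (hOsub hQO).1.1.mul_mem_right b (Set.mem_sInter.mp ha Q hQO)
    · exact hQ.1.1.mul_mem_left a (Set.mem_sInter.mp hb Q ⟨hQ, hQO⟩)
  rcases hGprime.2.2.2 (⋂₀ O) (⋂₀ (MinPrimesTI R \ O)) hAideal hBideal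
      (fun g => smul_sInter_eq g hOstab) (fun g => smul_sInter_eq g hCstab) hab with h | h
  · have hsub : ⋂₀ O ⊆ P' := fun x hx => by
      have : x = 0 := h hx
      rw [this]; exact hP'.1.1.zero_mem
    obtain ⟨Q, hQO, hQsub⟩ :=
      exists_subset_of_sInter_subset hP'.1 (hfin.subset hOsub)
        (fun Q hQ => (hOsub hQ).1.1) hsub
    obtain ⟨g, hg⟩ := hQO
    exact ⟨g, by rw [hg, hP'.2 Q (hOsub ⟨g, hg⟩).1 hQsub]⟩
  · exfalso
    have hsub : ⋂₀ (MinPrimesTI R \ O) ⊆ P := fun x hx => by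
      have : x = 0 := h hx
      rw [this]; exact hP.1.1.zero_mem
    obtain ⟨Q, hQC, hQsub⟩ :=
      exists_subset_of_sInter_subset hP.1 (hfin.subset (Set.diff_subset))
        (fun Q hQ => hQ.1.1.1) hsub
    have : Q = P := hP.2 Q hQC.1.1 hQsub
    exact hQC.2 (this ▸ hPO)
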